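/- The fiber gradient maps w ↦ e^{w-K_q(w)} - 1 (from q-centered random variables to {η : E_q[η]=0, η>-1}) and η ↦ log(1+η) - E_q[log(1+η)] are mutually inverse bijections. -/

import Mathlib

open Real Finset

noncomputable def Ex {Ω : Type*} [Fintype Ω] (p f : Ω → ℝ) : ℝ :=
  (∑ x, f x * p x) / (Fintype.card Ω : ℝ)

noncomputable def Kp {Ω : Type*} [Fintype Ω] (p : Ω → ℝ) (u : Ω → ℝ) : ℝ :=
  Real.log (Ex p (fun x => Real.exp (u x)))

/-- Fiber gradient of the cumulant Lagrangian. -/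
noncomputable def Fmap {Ω : Type*} [Fintype Ω] (q w : Ω → ℝ) : Ω → ℝ :=
  fun x => Real.exp (w x - Kp q w) - 1

/-- Fiber gradient of the conjugate Hamiltonian. -/
noncomputable def Gmap {Ω : Type*} [Fintype Ω] (q η : Ω → ℝ) : Ω → ℝ :=
  fun x => Real.log (1 + η x) - Ex q (fun y => Real.log (1 + η y))

section aux
variable {Ω : Type*} [Fintype Ω] [Nonempty Ω] (q : Ω → ℝ)

lemma Ex_smul' (c : ℝ) (f : Ω → ℝ) : Ex q (fun x => c * f x) = c * Ex q f := by
  simp [Ex, mul_assoc, ← Finset.mul_sum, mul_div_assoc]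

lemma Ex_sub' (f g : Ω → ℝ) : Ex q (fun x => f x - g x) = Ex q f - Ex q g := by
  simp [Ex, sub_mul, Finset.sum_sub_distrib, sub_div]

lemma Ex_add' (f g : Ω → ℝ) : Ex q (fun x => f x + g x) = Ex q f + Ex q g := by
  simp [Ex, add_mul, Finset.sum_add_distrib, add_div]

lemma Ex_exp_pos' (hq : ∀ x, 0 < q x) (w : Ω → ℝ) :
    0 < Ex q (fun x => Real.exp (w x)) := by
  apply div_pos
  · exact Finset.sum_pos (fun x _ => mul_pos (Real.exp_pos _) (hq x)) Finset.univ_nonempty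
  · exact_mod_cast Fintype.card_pos

lemma Ex_const' (hqd : Ex q (fun _ => 1) = 1) (c : ℝ) : Ex q (fun _ => c) = c := by
  have := Ex_smul' q c (fun _ => 1)
  simpa [hqd] using this

end aux

theorem stmt17 {Ω : Type*} [Fintype Ω] [Nonempty Ω]
    (q : Ω → ℝ) (hq : ∀ x, 0 < q x) (hqd : Ex q (fun _ => 1) = 1) :
    (∀ w : Ω → ℝ, Ex q w = 0 →
      Ex q (Fmap q w) = 0 ∧ (∀ x, -1 < Fmap q w x) ∧ Gmap q (Fmap q w) = w) ∧
    (∀ η : Ω → ℝ, Ex q η = 0 → (∀ x, -1 < η x) →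
      Ex q (Gmap q η) = 0 ∧ Fmap q (Gmap q η) = η) := by
  constructor
  · intro w hw
    have hKexp : Real.exp (Kp q w) = Ex q (fun x => Real.exp (w x)) :=
      Real.exp_log (Ex_exp_pos' q hq w)
    have hF0 : Ex q (Fmap q w) = 0 := by
      have h1 : Ex q (Fmap q w)
          = Ex q (fun x => Real.exp (-Kp q w) * Real.exp (w x)) - Ex q (fun _ => (1:ℝ)) := by
        rw [← Ex_sub']
        congr 1
        funext x
        rw [← Real.exp_add, Fmap]
        ring_nf
      rw [h1, Ex_smul', ← hKexp, ← Real.exp_add, hqd]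
      simp
    refine ⟨hF0, fun x => by simpa [Fmap] using Real.exp_pos (w x - Kp q w), ?_⟩
    funext x
    have hlog : ∀ y, Real.log (1 + Fmap q w y) = w y - Kp q w := by
      intro y
      simp [Fmap, Real.log_exp]
    have hE : Ex q (fun y => Real.log (1 + Fmap q w y)) = -Kp q w := by
      have : Ex q (fun y => Real.log (1 + Fmap q w y))
          = Ex q (fun y => w y - Kp q w) := by
        congr 1; funext y; exact hlog y
      rw [this, Ex_sub' q w (fun _ => Kp q w), hw, Ex_const' q hqd]
      ring
    simp [Gmap, hE, hlog x]
  · intro η hη hη1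
    set c := Ex q (fun y => Real.log (1 + η y)) with hc
    have hG0 : Ex q (Gmap q η) = 0 := by
      have h1 : Ex q (Gmap q η)
          = Ex q (fun y => Real.log (1 + η y)) - Ex q (fun _ => c) :=
        Ex_sub' q (fun y => Real.log (1 + η y)) (fun _ => c)
      rw [h1, Ex_const' q hqd, ← hc]; ring
    refine ⟨hG0, ?_⟩
    have hpos : ∀ y, (0:ℝ) < 1 + η y := fun y => by linarith [hη1 y]
    have hexpG : ∀ y, Real.exp (Gmap q η y) = Real.exp (-c) * (1 + η y) := by
      intro y
      rw [Gmap, Real.exp_sub, Real.exp_log (hpos y), ← hc, Real.exp_neg]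
      ring
    have hK : Kp q (Gmap q η) = -c := by
      have hE : Ex q (fun y => Real.exp (Gmap q η y)) = Real.exp (-c) := by
        have h1 : Ex q (fun y => Real.exp (Gmap q η y))
            = Ex q (fun y => Real.exp (-c) * (1 + η y)) := by
          congr 1; funext y; exact hexpG y
        rw [h1, Ex_smul', Ex_add' q (fun _ => 1) η, hqd, hη]
        ring
      rw [Kp, hE, Real.log_exp]
    funext x
    rw [Fmap, hK, Real.exp_sub, hexpG x, Real.exp_neg]
    field_simp
    ring
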